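/- Suppose 0 < ε and ε² < a². Let t₊ = 2 arctan(√(a²-ε²)/ε). Then the solution x_{α₊}(t) = ((ε sin t - √(a²-ε²) cos t)/a, (√(a²-ε²) sin t + ε cos t)/a, (-√(a²-ε²) sin t - ε cos t + ε)/a) satisfies x_{α₊}(0) = P = (-√(a²-ε²)/a, ε/a, 0) and x_{α₊}(t₊) = Q = (√(a²-ε²)/a, ε/a, 0). -/

import Mathlib

/-- The solution `x_{α₊}` starting at `P` reaches `Q` at time
`tp = 2 arctan(√(a²-ε²)/ε)`. -/
theorem stmt_10 (a ε : ℝ) (ha : a ≠ 0) (hε : 0 < ε) (hεa : ε ^ 2 < a ^ 2) :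
    let s := Real.sqrt (a ^ 2 - ε ^ 2)
    let tp := 2 * Real.arctan (s / ε)
    let γ : ℝ → ℝ × ℝ × ℝ := fun t =>
      ((ε * Real.sin t - s * Real.cos t) / a,
       (s * Real.sin t + ε * Real.cos t) / a,
       (-s * Real.sin t - ε * Real.cos t + ε) / a)
    γ 0 = (-s / a, ε / a, 0) ∧ γ tp = (s / a, ε / a, 0) := by
  intro s tp γ
  have hs2 : s ^ 2 = a ^ 2 - ε ^ 2 := Real.sq_sqrt (by nlinarith)
  have ha2 : a ^ 2 ≠ 0 := pow_ne_zero 2 ha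
  set x := s / ε with hx
  have hεne : ε ≠ 0 := ne_of_gt hε
  have h1x : 1 + x ^ 2 = a ^ 2 / ε ^ 2 := by
    field_simp [hx]
    rw [hx]; field_simp; linarith [hs2]
  have h1xpos : (0:ℝ) < 1 + x ^ 2 := by positivity
  have hsqrt : Real.sqrt (1 + x ^ 2) ^ 2 = 1 + x ^ 2 := Real.sq_sqrt h1xpos.le
  have hsqrtne : Real.sqrt (1 + x ^ 2) ≠ 0 := by positivity
  have hsin : Real.sin tp = 2 * s * ε / a ^ 2 := by
    have key : Real.sin tp = 2 * x / (1 + x ^ 2) := by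
      rw [show tp = 2 * Real.arctan x from rfl, Real.sin_two_mul,
        Real.sin_arctan, Real.cos_arctan]
      field_simp
      rw [hsqrt]
    rw [key, h1x, hx]
    field_simp
  have hcos : Real.cos tp = (ε ^ 2 - s ^ 2) / a ^ 2 := by
    rw [show tp = 2 * Real.arctan x from rfl, Real.cos_two_mul, Real.cos_arctan]
    rw [div_pow, one_pow, hsqrt, h1x]
    rw [show (ε ^ 2 - s ^ 2) = 2 * ε ^ 2 - a ^ 2 by linarith [hs2]]
    field_simp
  refine ⟨?_, ?_⟩
  · show ((ε * Real.sin 0 - s * Real.cos 0) / a, _, _) = _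
    norm_num [Real.sin_zero, Real.cos_zero]
  · show ((ε * Real.sin tp - s * Real.cos tp) / a, _, _) = _
    rw [hsin, hcos]
    refine Prod.ext ?_ (Prod.ext ?_ ?_) <;> simp <;> field_simp
    · linear_combination s * hs2
    · linear_combination hs2
    · left; linear_combination -ε * hs2
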